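/- Let V = ℝ^{K×n₁} × ℝ^{n₁×d} and let Φ : V → ℝ be differentiable. If the gradient ∇Φ(w,u) has strictly positive entries for every (w,u) ∈ S_+, then the global maximum of Φ on S_+ is attained at a point of S_{++}. -/

import Mathlib

noncomputable section

open Real Filter Topology

/-- Parameter space of a one-hidden-layer network: pairs `(w, u)`. -/
abbrev PV (K n1 d : ℕ) : Type :=
  (Fin K → Fin n1 → ℝ) × (Fin n1 → Fin d → ℝ)

/-- Entrywise `p`-norm of a vector. -/
def pnorm {ι : Type} [Fintype ι] (p : ℝ) (x : ι → ℝ) : ℝ :=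
  (∑ i, |x i| ^ p) ^ (1 / p)

/-- Entrywise `p`-norm of a matrix. -/
def pnormM {ι κ : Type} [Fintype ι] [Fintype κ] (p : ℝ) (x : ι → κ → ℝ) : ℝ :=
  (∑ i, ∑ j, |x i j| ^ p) ^ (1 / p)

/-- Hölder conjugate `p' = p/(p-1)`. -/
def hconj (p : ℝ) : ℝ := p / (p - 1)

/-- `ψ_p(x) = sign(x) |x|^{p-1}`. -/
def psi (p x : ℝ) : ℝ := Real.sign x * |x| ^ (p - 1)

/-- The constraint set `S₊`. -/
def Splus (K n1 d : ℕ) (pw pu ρw ρu : ℝ) : Set (PV K n1 d) :=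
  {z | (∀ i j, 0 ≤ z.1 i j) ∧ (∀ a b, 0 ≤ z.2 a b) ∧
    (∀ i, pnorm pw (z.1 i) = ρw) ∧ pnormM pu z.2 = ρu}

/-- The constraint set `S₊₊` (strictly positive entries). -/
def Spp (K n1 d : ℕ) (pw pu ρw ρu : ℝ) : Set (PV K n1 d) :=
  {z | (∀ i j, 0 < z.1 i j) ∧ (∀ a b, 0 < z.2 a b) ∧
    (∀ i, pnorm pw (z.1 i) = ρw) ∧ pnormM pu z.2 = ρu}

/-- The set `B₊₊` (strictly positive entries, norms at most `ρ`). -/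
def Bpp (K n1 d : ℕ) (pw pu ρw ρu : ℝ) : Set (PV K n1 d) :=
  {z | (∀ i j, 0 < z.1 i j) ∧ (∀ a b, 0 < z.2 a b) ∧
    (∀ i, pnorm pw (z.1 i) ≤ ρw) ∧ pnormM pu z.2 ≤ ρu}

/-- Coordinate direction for the entry `w_{a,b}`. -/
def eW {K n1 d : ℕ} (a : Fin K) (b : Fin n1) : PV K n1 d :=
  ((fun i j => if i = a ∧ j = b then 1 else 0), 0)

/-- Coordinate direction for the entry `u_{a,b}`. -/
def eU {K n1 d : ℕ} (a : Fin n1) (b : Fin d) : PV K n1 d :=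
  (0, fun i j => if i = a ∧ j = b then 1 else 0)

/-- Partial derivative `∂Φ/∂w_{a,b}`. -/
def gradW {K n1 d : ℕ} (Φ : PV K n1 d → ℝ) (z : PV K n1 d) (a : Fin K) (b : Fin n1) : ℝ :=
  fderiv ℝ Φ z (eW a b)

/-- Partial derivative `∂Φ/∂u_{a,b}`. -/
def gradU {K n1 d : ℕ} (Φ : PV K n1 d → ℝ) (z : PV K n1 d) (a : Fin n1) (b : Fin d) : ℝ :=
  fderiv ℝ Φ z (eU a b)

/-- The power-iteration map `G^Φ`. -/
def GPhi {K n1 d : ℕ} (pw pu ρw ρu : ℝ) (Φ : PV K n1 d → ℝ) (z : PV K n1 d) : PV K n1 d :=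
  ((fun i j => ρw * psi (hconj pw) (gradW Φ z i j) /
      pnorm pw (fun j' => psi (hconj pw) (gradW Φ z i j'))),
    fun a b => ρu * psi (hconj pu) (gradU Φ z a b) /
      pnormM pu (fun a' b' => psi (hconj pu) (gradU Φ z a' b')))

/-- One-hidden-layer network `f_r(w,u)(x)`. -/
def net {K n1 d : ℕ} (α : Fin n1 → ℝ) (w : Fin K → Fin n1 → ℝ) (u : Fin n1 → Fin d → ℝ)
    (x : Fin d → ℝ) (r : Fin K) : ℝ :=
  ∑ l, w r l * (∑ m, u l m * x m) ^ α l

/-- Cross-entropy loss. -/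
def loss {K : ℕ} (y : Fin K) (g : Fin K → ℝ) : ℝ :=
  -g y + Real.log (∑ j, Real.exp (g j))

/-- The objective `Φ`. -/
def Phi {K n1 d n : ℕ} (α : Fin n1 → ℝ) (x : Fin n → Fin d → ℝ) (y : Fin n → Fin K)
    (ε : ℝ) (z : PV K n1 d) : ℝ :=
  (1 / (n : ℝ)) * ∑ i, (-loss (y i) (net α z.1 z.2 (x i)) + ∑ r, net α z.1 z.2 (x i) r)
    + ε * ((∑ r, ∑ l, z.1 r l) + ∑ l, ∑ m, z.2 l m)

/-- Spectral radius of a real square matrix: maximum modulus of its (complex) eigenvalues. -/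
def specRad {m : ℕ} (A : Matrix (Fin m) (Fin m) ℝ) : ℝ :=
  sSup {r : ℝ | ∃ μ : ℂ, μ ∈ spectrum ℂ (A.map Complex.ofReal) ∧ r = ‖μ‖}

/-- Maximum of `g` over `Fin n`, `n > 0`. -/
def finMax {n : ℕ} (hn : 0 < n) (g : Fin n → ℝ) : ℝ :=
  Finset.univ.sup' (Finset.univ_nonempty_iff.mpr (Fin.pos_iff_nonempty.mp hn)) g

/-- Weighted Thompson metric `μ` with weights `γ`. -/
def thomW {K n1 d : ℕ} (γ : Fin (K + 1) → ℝ) (z z' : PV K n1 d) : ℝ :=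
  (∑ i : Fin K, γ i.castSucc *
      ‖(fun j : Fin n1 => Real.log (z.1 i j) - Real.log (z'.1 i j))‖)
    + γ (Fin.last K) *
      ‖(fun (a : Fin n1) (b : Fin d) => Real.log (z.2 a b) - Real.log (z'.2 a b))‖

/-- The function `Ψ^α_{p,q}` from the paper. -/
def PsiF {r : ℕ} (α : Fin r → ℝ) (p q : ℝ) (δ : Fin r → ℝ) (t : ℝ) : ℝ :=
  let J : Finset (Fin r) := Finset.univ.filter fun l => α l * p ≤ q
  let Jc : Finset (Fin r) := Finset.univ.filter fun l => q < α l * p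
  let ab : ℝ := if h : J.Nonempty then J.inf' h α else 0
  ((∑ l ∈ J, (δ l * t ^ α l) ^ (p * q / (q - ab * p))) ^ (1 - ab * p / q)
    + if h : Jc.Nonempty then Jc.sup' h fun j => (δ j * t ^ α j) ^ p else 0) ^ (1 / p)

end

section Aux

open Set

lemma sum_two_point {ι : Type} [Fintype ι] [DecidableEq ι] (G : ι → ℝ) (b b' : ι)
    (hbb : b ≠ b') (x y : ℝ) (hxy : x + y = G b + G b') :
    (∑ j, if j = b then x else if j = b' then y else G j) = ∑ j, G j := by
  rw [← Finset.add_sum_erase _ _ (Finset.mem_univ b),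
      ← Finset.add_sum_erase _ _ (Finset.mem_erase.mpr ⟨Ne.symm hbb, Finset.mem_univ b'⟩),
      ← Finset.add_sum_erase _ G (Finset.mem_univ b),
      ← Finset.add_sum_erase _ G (Finset.mem_erase.mpr ⟨Ne.symm hbb, Finset.mem_univ b'⟩)]
  have h1 : ∀ j ∈ (Finset.univ.erase b).erase b',
      (if j = b then x else if j = b' then y else G j) = G j := by
    intro j hj
    rw [Finset.mem_erase, Finset.mem_erase] at hj
    rw [if_neg hj.2.1, if_neg hj.1]
  rw [Finset.sum_congr rfl h1, if_pos rfl, if_neg (Ne.symm hbb), if_pos rfl]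
  linarith

lemma max_slope {f : ℝ → ℝ} {D c : ℝ} (hc : 0 < c) (hf : HasDerivAt f D 0)
    (hmax : ∀ t ∈ Set.Icc (0:ℝ) c, f t ≤ f 0) : D ≤ 0 := by
  have hloc : IsLocalMaxOn f (Set.Icc (0:ℝ) c) 0 := by
    have h1 : IsMaxOn f (Set.Icc (0:ℝ) c) 0 := isMaxOn_iff.mpr hmax
    exact h1.filter_mono inf_le_right
  have hcone : c ∈ posTangentConeAt (Set.Icc (0:ℝ) c) 0 := by
    refine mem_posTangentConeAt_of_segment_subset ?_
    rw [zero_add, segment_eq_Icc hc.le]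
  have h2 := hloc.hasFDerivWithinAt_nonpos hf.hasDerivWithinAt.hasFDerivWithinAt hcone
  simp only [ContinuousLinearMap.smulRight_apply, ContinuousLinearMap.one_apply,
    ContinuousLinearMap.toSpanSingleton_apply, smul_eq_mul] at h2
  nlinarith

lemma hderiv_at_zero {p c : ℝ} (hp : 1 < p) (hc : 0 < c) :
    HasDerivAt (fun t : ℝ => (c ^ p - t ^ p) ^ (1 / p)) 0 0 := by
  have hp0 : p ≠ 0 := by linarith
  have hin : HasDerivAt (fun t : ℝ => c ^ p - t ^ p) 0 0 := by
    have h := (hasDerivAt_const (0:ℝ) (c ^ p)).sub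
      (Real.hasDerivAt_rpow_const (x := 0) (p := p) (Or.inr hp.le))
    simpa [Real.zero_rpow (by linarith : p - 1 ≠ 0), Pi.sub_def] using h
  have hne : c ^ p - (0:ℝ) ^ p ≠ 0 := by
    rw [Real.zero_rpow hp0, sub_zero]; positivity
  have h2 := hin.rpow_const (p := 1 / p) (Or.inl hne)
  simpa using h2

lemma hfun_zero {p c : ℝ} (hp : 1 < p) (hc : 0 < c) :
    (c ^ p - (0:ℝ) ^ p) ^ (1 / p) = c := by
  have hp0 : p ≠ 0 := by linarith
  rw [Real.zero_rpow hp0, sub_zero, one_div, Real.rpow_rpow_inv hc.le hp0]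

lemma hfun_rpow {p c t : ℝ} (hp : 1 < p) (hc : 0 < c) (ht : t ∈ Set.Icc 0 c) :
    ((c ^ p - t ^ p) ^ (1 / p)) ^ p = c ^ p - t ^ p := by
  have hp0 : p ≠ 0 := by linarith
  have hsub : 0 ≤ c ^ p - t ^ p := by
    have := Real.rpow_le_rpow ht.1 ht.2 (by linarith : (0:ℝ) ≤ p)
    linarith
  rw [one_div, Real.rpow_inv_rpow hsub hp0]

lemma pnorm_sum_eq {ι : Type} [Fintype ι] {p ρ : ℝ} (hp : 0 < p)
    {x : ι → ℝ} (h : pnorm p x = ρ) : ∑ i, |x i| ^ p = ρ ^ p := by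
  have hs : 0 ≤ ∑ i, |x i| ^ p := Finset.sum_nonneg fun i _ => by positivity
  rw [← h]; unfold pnorm; rw [one_div, Real.rpow_inv_rpow hs hp.ne']

lemma pnorm_eq_of_sum {ι : Type} [Fintype ι] {p ρ : ℝ} (hp : 0 < p) (hρ : 0 < ρ)
    {x : ι → ℝ} (h : ∑ i, |x i| ^ p = ρ ^ p) : pnorm p x = ρ := by
  unfold pnorm; rw [h, one_div, Real.rpow_rpow_inv hρ.le hp.ne']

lemma rpow_helper {N p ρ : ℝ} (hN : 0 < N) (hp : 0 < p) (hρ : 0 < ρ) :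
    (N * |ρ * (N ^ (1/p))⁻¹| ^ p) ^ (1/p) = ρ := by
  have h1 : (0:ℝ) < ρ * (N ^ (1/p))⁻¹ := by positivity
  rw [abs_of_pos h1, Real.mul_rpow hρ.le (by positivity), Real.inv_rpow (by positivity), one_div,
      Real.rpow_inv_rpow hN.le hp.ne',
      show N * (ρ ^ p * N⁻¹) = ρ ^ p by field_simp]
  exact Real.rpow_rpow_inv hρ.le hp.ne'

end Aux
section Aux2
open Set

variable {K n1 d : ℕ} {pw pu ρw ρu : ℝ}

lemma splus_isCompact (hpw : 1 < pw) (hpu : 1 < pu) (hρw : 0 < ρw) (hρu : 0 < ρu) :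
    IsCompact (Splus K n1 d pw pu ρw ρu) := by
  have hpw0 : (0:ℝ) < pw := by linarith
  have hpu0 : (0:ℝ) < pu := by linarith
  have hT : IsCompact ((Set.univ.pi fun _ : Fin K => Set.univ.pi fun _ : Fin n1 =>
      Set.Icc (0:ℝ) ρw) ×ˢ (Set.univ.pi fun _ : Fin n1 => Set.univ.pi fun _ : Fin d =>
      Set.Icc (0:ℝ) ρu)) :=
    (isCompact_univ_pi fun _ => isCompact_univ_pi fun _ => isCompact_Icc).prod
      (isCompact_univ_pi fun _ => isCompact_univ_pi fun _ => isCompact_Icc)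
  refine hT.of_isClosed_subset ?_ ?_
  · have h1 : IsClosed {z : PV K n1 d | ∀ i j, 0 ≤ z.1 i j} := by
      have he : {z : PV K n1 d | ∀ i j, 0 ≤ z.1 i j}
          = ⋂ i, ⋂ j, {z : PV K n1 d | 0 ≤ z.1 i j} := by
        ext z; simp
      rw [he]
      exact isClosed_iInter fun i => isClosed_iInter fun j =>
        isClosed_le continuous_const
          ((continuous_apply j).comp ((continuous_apply i).comp continuous_fst))
    have h2 : IsClosed {z : PV K n1 d | ∀ a b, 0 ≤ z.2 a b} := by
      have he : {z : PV K n1 d | ∀ a b, 0 ≤ z.2 a b}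
          = ⋂ a, ⋂ b, {z : PV K n1 d | 0 ≤ z.2 a b} := by
        ext z; simp
      rw [he]
      exact isClosed_iInter fun a => isClosed_iInter fun b =>
        isClosed_le continuous_const
          ((continuous_apply b).comp ((continuous_apply a).comp continuous_snd))
    have hcont : Continuous (pnorm (ι := Fin n1) pw) := by
      unfold pnorm
      refine Continuous.rpow_const ?_ fun x => Or.inr (by positivity)
      exact continuous_finset_sum _ fun i _ =>
        ((continuous_abs.comp (continuous_apply i)).rpow_const fun x => Or.inr hpw0.le)
    have h3 : IsClosed {z : PV K n1 d | ∀ i, pnorm pw (z.1 i) = ρw} := by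
      have he : {z : PV K n1 d | ∀ i, pnorm pw (z.1 i) = ρw}
          = ⋂ i, {z : PV K n1 d | pnorm pw (z.1 i) = ρw} := by
        ext z; simp
      rw [he]
      exact isClosed_iInter fun i =>
        isClosed_eq (hcont.comp ((continuous_apply i).comp continuous_fst)) continuous_const
    have h4 : IsClosed {z : PV K n1 d | pnormM pu z.2 = ρu} := by
      have hcont2 : Continuous (pnormM (ι := Fin n1) (κ := Fin d) pu) := by
        unfold pnormM
        refine Continuous.rpow_const ?_ fun x => Or.inr (by positivity)
        exact continuous_finset_sum _ fun i _ => continuous_finset_sum _ fun j _ =>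
          ((continuous_abs.comp ((continuous_apply j).comp (continuous_apply i))).rpow_const
            fun x => Or.inr hpu0.le)
      exact isClosed_eq (hcont2.comp continuous_snd) continuous_const
    have : Splus K n1 d pw pu ρw ρu = {z : PV K n1 d | ∀ i j, 0 ≤ z.1 i j}
        ∩ ({z | ∀ a b, 0 ≤ z.2 a b} ∩ ({z | ∀ i, pnorm pw (z.1 i) = ρw}
          ∩ {z | pnormM pu z.2 = ρu})) := rfl
    rw [this]
    exact h1.inter (h2.inter (h3.inter h4))
  · rintro z ⟨hw, hu, hwn, hun⟩
    constructor
    · intro i _; intro j _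
      refine ⟨hw i j, ?_⟩
      have hsum : ∑ j', |z.1 i j'| ^ pw = ρw ^ pw := pnorm_sum_eq hpw0 (hwn i)
      have h1 : |z.1 i j| ^ pw ≤ ρw ^ pw := by
        rw [← hsum]
        exact Finset.single_le_sum (f := fun k => |z.1 i k| ^ pw)
          (fun k _ => by positivity) (Finset.mem_univ j)
      by_contra hlt
      push_neg at hlt
      have h2 : ρw ^ pw < |z.1 i j| ^ pw :=
        Real.rpow_lt_rpow hρw.le (by rw [abs_of_nonneg (hw i j)]; exact hlt) hpw0
      linarith
    · intro a _; intro b _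
      refine ⟨hu a b, ?_⟩
      have hsum : ∑ a', ∑ b', |z.2 a' b'| ^ pu = ρu ^ pu := by
        have hs : 0 ≤ ∑ a', ∑ b', |z.2 a' b'| ^ pu :=
          Finset.sum_nonneg fun i _ => Finset.sum_nonneg fun j _ => by positivity
        have := hun
        unfold pnormM at this
        rw [← this, one_div, Real.rpow_inv_rpow hs hpu0.ne']
      have h1 : |z.2 a b| ^ pu ≤ ρu ^ pu := by
        rw [← hsum]
        calc |z.2 a b| ^ pu ≤ ∑ b', |z.2 a b'| ^ pu :=
              Finset.single_le_sum (f := fun k => |z.2 a k| ^ pu)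
                (fun k _ => by positivity) (Finset.mem_univ b)
          _ ≤ ∑ a', ∑ b', |z.2 a' b'| ^ pu :=
              Finset.single_le_sum (f := fun k => ∑ b', |z.2 k b'| ^ pu)
                (fun k _ => Finset.sum_nonneg fun j _ => by positivity) (Finset.mem_univ a)
      by_contra hlt
      push_neg at hlt
      have h2 : ρu ^ pu < |z.2 a b| ^ pu :=
        Real.rpow_lt_rpow hρu.le (by rw [abs_of_nonneg (hu a b)]; exact hlt) hpu0
      linarith

lemma splus_nonempty (hn1 : 0 < n1) (hd : 0 < d) (hpw : 1 < pw) (hpu : 1 < pu)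
    (hρw : 0 < ρw) (hρu : 0 < ρu) : (Splus K n1 d pw pu ρw ρu).Nonempty := by
  have hpw0 : (0:ℝ) < pw := by linarith
  have hpu0 : (0:ℝ) < pu := by linarith
  have hN : (0:ℝ) < (n1 : ℝ) := by exact_mod_cast hn1
  have hM : (0:ℝ) < (n1 : ℝ) * (d : ℝ) := by
    have : (0:ℝ) < (d:ℝ) := by exact_mod_cast hd
    positivity
  refine ⟨(fun _ _ => ρw * (((n1:ℝ)) ^ (1/pw))⁻¹,
    fun _ _ => ρu * ((((n1:ℝ) * d)) ^ (1/pu))⁻¹), ?_, ?_, ?_, ?_⟩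
  · intro i j; positivity
  · intro a b; positivity
  · intro i
    show pnorm pw (fun _ : Fin n1 => ρw * (((n1:ℝ)) ^ (1/pw))⁻¹) = ρw
    unfold pnorm
    rw [Finset.sum_const, Finset.card_univ, Fintype.card_fin, nsmul_eq_mul]
    exact rpow_helper hN hpw0 hρw
  · show pnormM pu (fun _ : Fin n1 => fun _ : Fin d => ρu * ((((n1:ℝ) * d)) ^ (1/pu))⁻¹) = ρu
    unfold pnormM
    simp only [Finset.sum_const, Finset.card_univ, Fintype.card_fin, nsmul_eq_mul]
    rw [← mul_assoc]
    exact rpow_helper hM hpu0 hρu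

end Aux2

/-- If `∇Φ` is strictly positive on `S₊`, the global maximum of `Φ` on `S₊`
is attained at a point of `S₊₊`. -/
theorem statement1 {K n1 d : ℕ} (hn1 : 0 < n1) (hd : 0 < d)
    (pw pu : ℝ) (hpw : 1 < pw) (hpu : 1 < pu)
    (ρw ρu : ℝ) (hρw : 0 < ρw) (hρu : 0 < ρu)
    (Φ : PV K n1 d → ℝ) (hΦ : Differentiable ℝ Φ)
    (hgrad : ∀ z ∈ Splus K n1 d pw pu ρw ρu,
      (∀ i j, 0 < gradW Φ z i j) ∧ (∀ a b, 0 < gradU Φ z a b)) :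
    ∃ zs ∈ Spp K n1 d pw pu ρw ρu, IsMaxOn Φ (Splus K n1 d pw pu ρw ρu) zs := by
  classical
  have hpw0 : (0:ℝ) < pw := by linarith
  have hpu0 : (0:ℝ) < pu := by linarith
  obtain ⟨zs, hzs, hmax⟩ := (splus_isCompact hpw hpu hρw hρu).exists_isMaxOn
    (splus_nonempty hn1 hd hpw hpu hρw hρu) (hΦ.continuous.continuousOn)
  refine ⟨zs, ⟨?_, ?_, hzs.2.2.1, hzs.2.2.2⟩, hmax⟩
  · -- W case
    intro a b
    rcases (hzs.1 a b).lt_or_eq with hpos | h0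
    · exact hpos
    exfalso
    have hsum : ∑ j, |zs.1 a j| ^ pw = ρw ^ pw := pnorm_sum_eq hpw0 (hzs.2.2.1 a)
    have hex : ∃ b', 0 < zs.1 a b' := by
      by_contra hno
      push_neg at hno
      have hz : ∀ j, zs.1 a j = 0 := fun j => le_antisymm (hno j) (hzs.1 a j)
      have h00 : ∑ j, |zs.1 a j| ^ pw = 0 :=
        Finset.sum_eq_zero fun j _ => by
          rw [hz j, abs_zero, Real.zero_rpow hpw0.ne']
      have hpos' : (0:ℝ) < ρw ^ pw := Real.rpow_pos_of_pos hρw _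
      rw [h00] at hsum
      linarith
    obtain ⟨b', hb'⟩ := hex
    have hbb' : b ≠ b' := by
      intro e
      rw [e] at h0
      exact hb'.ne' h0.symm
    have hcpos : 0 < zs.1 a b' := hb'
    set c : ℝ := zs.1 a b' with hcdef
    set hf : ℝ → ℝ := fun t => (c ^ pw - t ^ pw) ^ (1/pw) with hfdef
    set γ : ℝ → PV K n1 d := fun t =>
      (fun i j => if i = a then (if j = b then t else if j = b' then hf t else zs.1 i j)
        else zs.1 i j, zs.2) with hγdef
    have hf0 : hf 0 = c := hfun_zero hpw hcpos
    have hγ0 : γ 0 = zs := by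
      simp only [hγdef]
      refine Prod.ext_iff.mpr ⟨?_, rfl⟩
      funext i j
      show (if i = a then (if j = b then (0:ℝ) else if j = b' then hf 0 else zs.1 i j)
        else zs.1 i j) = zs.1 i j
      by_cases hi : i = a
      · rw [if_pos hi]
        by_cases hjb : j = b
        · rw [if_pos hjb, hi, hjb]; exact h0
        · rw [if_neg hjb]
          by_cases hjb' : j = b'
          · rw [if_pos hjb', hf0, hi, hjb', hcdef]
          · rw [if_neg hjb']
      · rw [if_neg hi]
    have hγd : HasDerivAt γ (eW a b) 0 := by
      simp only [hγdef]
      show HasDerivAt _ (((fun i j => if i = a ∧ j = b then (1:ℝ) else 0) :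
        Fin K → Fin n1 → ℝ), (0 : Fin n1 → Fin d → ℝ)) 0
      refine HasDerivAt.prodMk ?_ (hasDerivAt_const _ _)
      rw [hasDerivAt_pi]
      intro i
      rw [hasDerivAt_pi]
      intro j
      by_cases hi : i = a
      · by_cases hjb : j = b
        · simpa [hi, hjb] using hasDerivAt_id' (0:ℝ)
        · by_cases hjb' : j = b'
          · simpa [hi, hjb, hjb', Ne.symm hbb', hfdef] using hderiv_at_zero hpw hcpos
          · simpa [hi, hjb, hjb'] using hasDerivAt_const (0:ℝ) (zs.1 a j)
      · simpa [hi] using hasDerivAt_const (0:ℝ) (zs.1 i j)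
    have hmem : ∀ t ∈ Set.Icc (0:ℝ) c, γ t ∈ Splus K n1 d pw pu ρw ρu := by
      intro t ht
      have hbase : 0 ≤ c ^ pw - t ^ pw := by
        have := Real.rpow_le_rpow ht.1 ht.2 hpw0.le
        linarith
      have hft : 0 ≤ hf t := by
        rw [hfdef]
        exact Real.rpow_nonneg hbase _
      simp only [hγdef]
      refine ⟨?_, hzs.2.1, ?_, hzs.2.2.2⟩
      · intro i j
        show 0 ≤ (if i = a then (if j = b then t else if j = b' then hf t else zs.1 i j)
          else zs.1 i j)
        by_cases hi : i = a
        · rw [if_pos hi]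
          by_cases hjb : j = b
          · rw [if_pos hjb]; exact ht.1
          · rw [if_neg hjb]
            by_cases hjb' : j = b'
            · rw [if_pos hjb']; exact hft
            · rw [if_neg hjb']; rw [hi]; exact hzs.1 a j
        · rw [if_neg hi]; exact hzs.1 i j
      · intro i
        show pnorm pw (fun j => if i = a then
          (if j = b then t else if j = b' then hf t else zs.1 i j) else zs.1 i j) = ρw
        by_cases hi : i = a
        · have he : (fun j => if i = a then
              (if j = b then t else if j = b' then hf t else zs.1 i j) else zs.1 i j)
              = fun j => if j = b then t else if j = b' then hf t else zs.1 a j := by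
            funext j
            rw [if_pos hi, hi]
          rw [he]
          refine pnorm_eq_of_sum hpw0 hρw ?_
          show (∑ j, |if j = b then t else if j = b' then hf t else zs.1 a j| ^ pw) = ρw ^ pw
          have hrw : ∀ j : Fin n1, |if j = b then t else if j = b' then hf t
              else zs.1 a j| ^ pw
              = if j = b then |t| ^ pw else if j = b' then |hf t| ^ pw
                else |zs.1 a j| ^ pw := by
            intro j
            by_cases hjb : j = b
            · rw [if_pos hjb, if_pos hjb]
            · rw [if_neg hjb, if_neg hjb]
              by_cases hjb' : j = b'
              · rw [if_pos hjb', if_pos hjb']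
              · rw [if_neg hjb', if_neg hjb']
          have hxy : |t| ^ pw + |hf t| ^ pw
              = (fun j => |zs.1 a j| ^ pw) b + (fun j => |zs.1 a j| ^ pw) b' := by
            show |t| ^ pw + |hf t| ^ pw = |zs.1 a b| ^ pw + |zs.1 a b'| ^ pw
            rw [abs_of_nonneg ht.1, abs_of_nonneg hft, hfdef]
            rw [hfun_rpow hpw hcpos ht]
            rw [← h0, abs_zero, Real.zero_rpow hpw0.ne', ← hcdef, abs_of_pos hcpos]
            ring
          refine (Finset.sum_congr rfl fun j _ => hrw j).trans ?_
          exact (sum_two_point (fun j => |zs.1 a j| ^ pw) b b' hbb'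
            (|t| ^ pw) (|hf t| ^ pw) hxy).trans hsum
        · show pnorm pw (fun j => if i = a then
            (if j = b then t else if j = b' then hf t else zs.1 i j) else zs.1 i j) = ρw
          have he : (fun j => if i = a then
              (if j = b then t else if j = b' then hf t else zs.1 i j) else zs.1 i j)
              = zs.1 i := by
            funext j; rw [if_neg hi]
          rw [he]
          exact hzs.2.2.1 i
    have hD : HasDerivAt (fun t => Φ (γ t)) (gradW Φ zs a b) 0 := by
      have h1 : HasFDerivAt Φ (fderiv ℝ Φ zs) (γ 0) := by
        rw [hγ0]; exact (hΦ zs).hasFDerivAt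
      have h2 := h1.comp_hasDerivAt 0 hγd
      exact h2
    have hle : gradW Φ zs a b ≤ 0 := by
      refine max_slope hcpos hD ?_
      intro t ht
      have h3 := isMaxOn_iff.mp hmax (γ t) (hmem t ht)
      rw [hγ0]
      exact h3
    exact absurd hle (not_le.mpr ((hgrad zs hzs).1 a b))
  · -- U case
    intro a b
    rcases (hzs.2.1 a b).lt_or_eq with hpos | h0
    · exact hpos
    exfalso
    have hsum : ∑ i, ∑ j, |zs.2 i j| ^ pu = ρu ^ pu := by
      have hs : 0 ≤ ∑ i, ∑ j, |zs.2 i j| ^ pu :=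
        Finset.sum_nonneg fun i _ => Finset.sum_nonneg fun j _ => by positivity
      have h := hzs.2.2.2
      unfold pnormM at h
      rw [← h, one_div, Real.rpow_inv_rpow hs hpu0.ne']
    have hex : ∃ q : Fin n1 × Fin d, 0 < zs.2 q.1 q.2 := by
      by_contra hno
      push_neg at hno
      have hz : ∀ i j, zs.2 i j = 0 := fun i j => le_antisymm (hno (i, j)) (hzs.2.1 i j)
      have h00 : ∑ i, ∑ j, |zs.2 i j| ^ pu = 0 :=
        Finset.sum_eq_zero fun i _ => Finset.sum_eq_zero fun j _ => by
          rw [hz i j, abs_zero, Real.zero_rpow hpu0.ne']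
      have hpos' : (0:ℝ) < ρu ^ pu := Real.rpow_pos_of_pos hρu _
      rw [h00] at hsum
      linarith
    obtain ⟨⟨a', b'⟩, hb'⟩ := hex
    have hne : ((a, b) : Fin n1 × Fin d) ≠ (a', b') := by
      intro e
      rw [Prod.mk.injEq] at e
      rw [e.1, e.2] at h0
      exact hb'.ne' h0.symm
    have hcpos : 0 < zs.2 a' b' := hb'
    set c : ℝ := zs.2 a' b' with hcdef
    set hfu : ℝ → ℝ := fun t => (c ^ pu - t ^ pu) ^ (1/pu) with hfdef
    set γ : ℝ → PV K n1 d := fun t =>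
      (zs.1, fun i j => if i = a ∧ j = b then t
        else if i = a' ∧ j = b' then hfu t else zs.2 i j) with hγdef
    have hf0 : hfu 0 = c := hfun_zero hpu hcpos
    have hγ0 : γ 0 = zs := by
      simp only [hγdef]
      refine Prod.ext_iff.mpr ⟨rfl, ?_⟩
      funext i j
      show (if i = a ∧ j = b then (0:ℝ)
        else if i = a' ∧ j = b' then hfu 0 else zs.2 i j) = zs.2 i j
      by_cases h1 : i = a ∧ j = b
      · rw [if_pos h1, h1.1, h1.2]; exact h0
      · rw [if_neg h1]
        by_cases h2 : i = a' ∧ j = b'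
        · rw [if_pos h2, hf0, h2.1, h2.2, hcdef]
        · rw [if_neg h2]
    have hγd : HasDerivAt γ (eU a b) 0 := by
      simp only [hγdef]
      show HasDerivAt _ ((0 : Fin K → Fin n1 → ℝ),
        ((fun i j => if i = a ∧ j = b then (1:ℝ) else 0) : Fin n1 → Fin d → ℝ)) 0
      refine HasDerivAt.prodMk (hasDerivAt_const _ _) ?_
      rw [hasDerivAt_pi]
      intro i
      rw [hasDerivAt_pi]
      intro j
      by_cases h1 : i = a ∧ j = b
      · obtain ⟨rfl, rfl⟩ := h1
        simpa using hasDerivAt_id' (0:ℝ)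
      · by_cases h2 : i = a' ∧ j = b'
        · obtain ⟨rfl, rfl⟩ := h2
          simpa [h1, hfdef] using hderiv_at_zero hpu hcpos
        · simpa [h1, h2] using hasDerivAt_const (0:ℝ) (zs.2 i j)
    have hmem : ∀ t ∈ Set.Icc (0:ℝ) c, γ t ∈ Splus K n1 d pw pu ρw ρu := by
      intro t ht
      have hbase : 0 ≤ c ^ pu - t ^ pu := by
        have := Real.rpow_le_rpow ht.1 ht.2 hpu0.le
        linarith
      have hft : 0 ≤ hfu t := by
        rw [hfdef]
        exact Real.rpow_nonneg hbase _
      simp only [hγdef]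
      refine ⟨hzs.1, ?_, hzs.2.2.1, ?_⟩
      · intro i j
        show 0 ≤ (if i = a ∧ j = b then t
          else if i = a' ∧ j = b' then hfu t else zs.2 i j)
        by_cases h1 : i = a ∧ j = b
        · rw [if_pos h1]; exact ht.1
        · rw [if_neg h1]
          by_cases h2 : i = a' ∧ j = b'
          · rw [if_pos h2]; exact hft
          · rw [if_neg h2]; exact hzs.2.1 i j
      · show pnormM pu (fun i j => if i = a ∧ j = b then t
          else if i = a' ∧ j = b' then hfu t else zs.2 i j) = ρu
        have hstep : ∀ (F : Fin n1 → Fin d → ℝ),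
            ∑ i, ∑ j, F i j = ∑ q : Fin n1 × Fin d, F q.1 q.2 := by
          intro F
          rw [← Finset.univ_product_univ, Finset.sum_product]
        have hcong : ∀ q : Fin n1 × Fin d,
            |if q.1 = a ∧ q.2 = b then t
              else if q.1 = a' ∧ q.2 = b' then hfu t else zs.2 q.1 q.2| ^ pu
            = if q = (a, b) then |t| ^ pu else if q = (a', b') then |hfu t| ^ pu
              else |zs.2 q.1 q.2| ^ pu := by
          intro q
          by_cases h1 : q = (a, b)
          · subst h1
            rw [if_pos ⟨rfl, rfl⟩, if_pos rfl]
          · rw [if_neg h1, if_neg (fun h => h1 (Prod.ext_iff.mpr h))]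
            by_cases h2 : q = (a', b')
            · subst h2
              rw [if_pos ⟨rfl, rfl⟩, if_pos rfl]
            · rw [if_neg h2, if_neg (fun h => h2 (Prod.ext_iff.mpr h))]
        have hxy : |t| ^ pu + |hfu t| ^ pu
            = (fun q : Fin n1 × Fin d => |zs.2 q.1 q.2| ^ pu) (a, b)
              + (fun q : Fin n1 × Fin d => |zs.2 q.1 q.2| ^ pu) (a', b') := by
          show |t| ^ pu + |hfu t| ^ pu = |zs.2 a b| ^ pu + |zs.2 a' b'| ^ pu
          rw [abs_of_nonneg ht.1, abs_of_nonneg hft, hfdef]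
          rw [hfun_rpow hpu hcpos ht]
          rw [← h0, abs_zero, Real.zero_rpow hpu0.ne', ← hcdef, abs_of_pos hcpos]
          ring
        have key : (∑ i, ∑ j, |if i = a ∧ j = b then t
            else if i = a' ∧ j = b' then hfu t else zs.2 i j| ^ pu) = ρu ^ pu := by
          refine (hstep _).trans ?_
          refine (Finset.sum_congr rfl fun q _ => hcong q).trans ?_
          refine (sum_two_point (fun q : Fin n1 × Fin d => |zs.2 q.1 q.2| ^ pu)
            (a, b) (a', b') hne (|t| ^ pu) (|hfu t| ^ pu) hxy).trans ?_
          exact (hstep fun i j => |zs.2 i j| ^ pu).symm.trans hsum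
        show (∑ i, ∑ j, |if i = a ∧ j = b then t
          else if i = a' ∧ j = b' then hfu t else zs.2 i j| ^ pu) ^ (1/pu) = ρu
        rw [key, one_div, Real.rpow_rpow_inv hρu.le hpu0.ne']
    have hD : HasDerivAt (fun t => Φ (γ t)) (gradU Φ zs a b) 0 := by
      have h1 : HasFDerivAt Φ (fderiv ℝ Φ zs) (γ 0) := by
        rw [hγ0]; exact (hΦ zs).hasFDerivAt
      have h2 := h1.comp_hasDerivAt 0 hγd
      exact h2
    have hle : gradU Φ zs a b ≤ 0 := by
      refine max_slope hcpos hD ?_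
      intro t ht
      have h3 := isMaxOn_iff.mp hmax (γ t) (hmem t ht)
      rw [hγ0]
      exact h3
    exact absurd hle (not_le.mpr ((hgrad zs hzs).2 a b))
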